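/- Fix n ∈ ℕ and 0 ≤ k ≤ n. Let S̃_{n,k} ⊆ S_{n+1} be the set of permutations π with π(1) < ⋯ < π(n−k), π(n−k+1) = n+1, and π(n−k+2) > ⋯ > π(n+1), and let ω̃ = (s_n ⋯ s_{n−k+1})(s_n ⋯ s_{n−k+2}) ⋯ (s_n s_{n−1})(s_n) ∈ S_{n+1} (with ω̃ = id when k = 0). Then S̃_{n,k} = S_{n−k,k} · ω̃, where S_{n−k,k} ⊆ S_{n+1} is the set of (n−k)-shuffles of S_n (permutations σ ∈ S_n with σ(1) < ⋯ < σ(n−k) and σ(n−k+1) < ⋯ < σ(n)), viewed in S_{n+1}. -/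
import Mathlib


namespace Stmt

/-- The adjacent transposition `s_{i+1} = (i, i+1)` (0-based) in the symmetric group on
`Fin m`; indices out of range give the identity. -/
def sNat (m i : ℕ) : Equiv.Perm (Fin m) :=
  if h : i + 1 < m then Equiv.swap ⟨i, by omega⟩ ⟨i + 1, h⟩ else 1

/-- The permutation represented by a word in the adjacent transpositions. -/
def toPerm (m : ℕ) (l : List ℕ) : Equiv.Perm (Fin m) := (l.map (sNat m)).prod

/-- `l` is a reduced decomposition of `π`: it represents `π` and has minimal length among
all words representing `π`. -/
def IsReduced (m : ℕ) (l : List ℕ) (π : Equiv.Perm (Fin m)) : Prop :=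
  toPerm m l = π ∧ ∀ l' : List ℕ, toPerm m l' = π → l.length ≤ l'.length

end Stmt
namespace Stmt

/-- Membership in `S̃_{n,k} ⊆ S_{n+1}` (0-based positions): `π(1) < ⋯ < π(n−k)`,
`π(n−k+1) = n+1`, `π(n−k+2) > ⋯ > π(n+1)`. -/
def StildeP (n k : ℕ) (π : Equiv.Perm (Fin (n + 1))) : Prop :=
  (∀ a b : Fin (n + 1), a < b → (b : ℕ) < n - k → π a < π b) ∧
  π ⟨n - k, by omega⟩ = Fin.last n ∧
  (∀ a b : Fin (n + 1), n - k < (a : ℕ) → a < b → π b < π a)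

end Stmt

namespace Stmt

/-- Membership of `σ ∈ S_{n−k,k} ⊆ S_n ⊆ S_{n+1}`: `σ` fixes the last point and is an
`(n−k)`-shuffle of `S_n`, i.e. `σ(1) < ⋯ < σ(n−k)` and `σ(n−k+1) < ⋯ < σ(n)`
(0-based positions). -/
def ShuffleInSnP (n k : ℕ) (σ : Equiv.Perm (Fin (n + 1))) : Prop :=
  σ (Fin.last n) = Fin.last n ∧
  (∀ a b : Fin (n + 1), a < b → (b : ℕ) < n - k → σ a < σ b) ∧
  (∀ a b : Fin (n + 1), n - k ≤ (a : ℕ) → a < b → (b : ℕ) < n → σ a < σ b)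

/-- The word (in 0-based generator indices) for
`ω̃ = (s_n ⋯ s_{n−k+1})(s_n ⋯ s_{n−k+2}) ⋯ (s_n s_{n−1})(s_n) ∈ S_{n+1}`. -/
def omegaTildeList (n k : ℕ) : List ℕ :=
  (List.range k).flatMap (fun r => (List.range (k - r)).map (fun t => n - 1 - t))

lemma toPerm_append (m : ℕ) (a b : List ℕ) :
    toPerm m (a ++ b) = toPerm m a * toPerm m b := by
  simp [toPerm]

lemma omegaTildeList_succ (n k : ℕ) :
    omegaTildeList n (k+1) =
      (List.range (k+1)).map (fun t => n - 1 - t) ++ omegaTildeList n k := by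
  simp [omegaTildeList, List.range_succ_eq_map, List.flatMap_cons, List.flatMap_map,
    Nat.succ_sub_succ, Function.comp]

lemma block_apply (n : ℕ) : ∀ j, j ≤ n → ∀ i : Fin (n+1),
    ((toPerm (n+1) ((List.range j).map (fun t => n - 1 - t))) i : ℕ) =
      if (i:ℕ) < n - j then (i:ℕ) else if (i:ℕ) = n - j then n else (i:ℕ) - 1 := by
  intro j
  induction j with
  | zero =>
    intro _ i
    have := i.isLt
    simp only [List.range_zero, List.map_nil, toPerm, List.prod_nil, Equiv.Perm.one_apply]
    split_ifs <;> omega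
  | succ j ih =>
    intro hj i
    have hj' : j ≤ n := by omega
    rw [List.range_succ, List.map_append, toPerm_append, Equiv.Perm.mul_apply]
    simp only [List.map_cons, List.map_nil]
    have hlt : n - 1 - j + 1 < n + 1 := by omega
    have hs : toPerm (n+1) [n-1-j] = Equiv.swap ⟨n-1-j, by omega⟩ ⟨n-1-j+1, hlt⟩ := by
      simp only [toPerm, List.map_cons, List.map_nil, List.prod_cons, List.prod_nil, mul_one]
      rw [sNat, dif_pos hlt]
    rw [hs]
    have hi := i.isLt
    by_cases h1 : (i:ℕ) = n - 1 - j
    · have : i = ⟨n-1-j, by omega⟩ := Fin.ext h1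
      rw [this, Equiv.swap_apply_left, ih hj']
      simp only
      split_ifs <;> omega
    · by_cases h2 : (i:ℕ) = n - 1 - j + 1
      · have : i = ⟨n-1-j+1, hlt⟩ := Fin.ext h2
        rw [this, Equiv.swap_apply_right, ih hj']
        simp only
        split_ifs <;> omega
      · rw [Equiv.swap_apply_of_ne_of_ne (by simp [Fin.ext_iff]; omega)
          (by simp [Fin.ext_iff]; omega), ih hj']
        split_ifs <;> omega

lemma omega_apply (n : ℕ) : ∀ k, k ≤ n → ∀ i : Fin (n+1),
    ((toPerm (n+1) (omegaTildeList n k)) i : ℕ) =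
      if (i:ℕ) < n - k then (i:ℕ) else 2*n - k - (i:ℕ) := by
  intro k
  induction k with
  | zero =>
    intro _ i
    have := i.isLt
    simp only [omegaTildeList, List.range_zero, List.flatMap_nil, toPerm, List.map_nil,
      List.prod_nil, Equiv.Perm.one_apply]
    split_ifs <;> omega
  | succ k ih =>
    intro hk i
    have hi := i.isLt
    rw [omegaTildeList_succ, toPerm_append, Equiv.Perm.mul_apply]
    have h1 := ih (by omega) i
    have h2 := block_apply n (k+1) hk (toPerm (n+1) (omegaTildeList n k) i)
    rw [h2, h1]
    split_ifs <;> omega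

lemma omega_sq (n k : ℕ) (hk : k ≤ n) :
    toPerm (n+1) (omegaTildeList n k) * toPerm (n+1) (omegaTildeList n k) = 1 := by
  apply Equiv.ext
  intro i
  have hi := i.isLt
  have h1 := omega_apply n k hk i
  have h2 := omega_apply n k hk (toPerm (n+1) (omegaTildeList n k) i)
  rw [h1] at h2
  rw [Equiv.Perm.mul_apply, Equiv.Perm.one_apply, Fin.ext_iff, h2]
  split_ifs <;> omega

/-- `S̃_{n,k} = S_{n−k,k} · ω̃` inside `S_{n+1}`. -/
theorem stilde_eq_shuffles_mul_omega (n k : ℕ) (hn : 1 ≤ n) (hk : k ≤ n) :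
    {π : Equiv.Perm (Fin (n + 1)) | StildeP n k π} =
      (fun σ => σ * toPerm (n + 1) (omegaTildeList n k)) ''
        {σ : Equiv.Perm (Fin (n + 1)) | ShuffleInSnP n k σ} := by
  set W := toPerm (n + 1) (omegaTildeList n k) with hWdef
  have wapp : ∀ i : Fin (n+1), ((W i : Fin (n+1)) : ℕ) =
      if (i:ℕ) < n - k then (i:ℕ) else 2*n - k - (i:ℕ) := omega_apply n k hk
  have hWfix : ∀ a : Fin (n+1), (a:ℕ) < n - k → W a = a := by
    intro a ha
    apply Fin.ext
    rw [wapp a, if_pos ha]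
  have hWhi : ∀ a : Fin (n+1), n - k ≤ (a:ℕ) → ((W a : Fin (n+1)) : ℕ) = 2*n - k - a := by
    intro a ha
    rw [wapp a, if_neg (by omega)]
  ext π
  simp only [Set.mem_setOf_eq, Set.mem_image]
  constructor
  · rintro ⟨h1, h2, h3⟩
    refine ⟨π * W, ⟨?_, ?_, ?_⟩, ?_⟩
    · have hl : W (Fin.last n) = ⟨n - k, by omega⟩ := by
        apply Fin.ext
        rw [hWhi (Fin.last n) (by simp)]
        simp [Fin.last]
        omega
      rw [Equiv.Perm.mul_apply, hl, h2]
    · intro a b hab hb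
      have hab' : (a:ℕ) < (b:ℕ) := hab
      rw [Equiv.Perm.mul_apply, Equiv.Perm.mul_apply, hWfix a (by omega), hWfix b hb]
      exact h1 a b hab hb
    · intro a b ha hab hb
      have hab' : (a:ℕ) < (b:ℕ) := hab
      have hb' : (b:ℕ) ≤ n := by have := b.isLt; omega
      have hwa := hWhi a ha
      have hwb := hWhi b (by omega)
      rw [Equiv.Perm.mul_apply, Equiv.Perm.mul_apply]
      exact h3 (W b) (W a) (by omega) (by rw [Fin.lt_def]; omega)
    · rw [mul_assoc, omega_sq n k hk, mul_one]
  · rintro ⟨σ, ⟨g1, g2, g3⟩, rfl⟩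
    refine ⟨?_, ?_, ?_⟩
    · intro a b hab hb
      have hab' : (a:ℕ) < (b:ℕ) := hab
      rw [Equiv.Perm.mul_apply, Equiv.Perm.mul_apply, hWfix a (by omega), hWfix b hb]
      exact g2 a b hab hb
    · have hl : W ⟨n - k, by omega⟩ = Fin.last n := by
        apply Fin.ext
        rw [hWhi ⟨n - k, by omega⟩ (by simp)]
        simp [Fin.last]
        omega
      rw [Equiv.Perm.mul_apply, hl, g1]
    · intro a b ha hab
      have hab' : (a:ℕ) < (b:ℕ) := hab
      have hb' : (b:ℕ) ≤ n := by have := b.isLt; omega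
      have hwa := hWhi a (by omega)
      have hwb := hWhi b (by omega)
      rw [Equiv.Perm.mul_apply, Equiv.Perm.mul_apply]
      exact g3 (W b) (W a) (by omega) (by rw [Fin.lt_def]; omega) (by omega)

end Stmt
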